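/- For every real k > 0 there is a constant α_k > 0 such that: if T1 and T2 are (unrooted) binary phylogenetic trees on the same leaf-set of cardinality n, and T1 has radius at most k·log n − 1, then mast{T1, T2} ≥ α_k·log n. -/

import Mathlib

/-!
# Rooted binary phylogenetic trees

`RTree L` is the type of rooted binary trees with leaves labelled by elements of `L`:
every internal vertex has exactly two children (a left child and a right child), and
a tree with one leaf is a single vertex.
-/

inductive RTree (L : Type) : Type
  | leaf : L → RTree L
  | node : RTree L → RTree L → RTree L

namespace RTree

variable {L : Type}

/-- The list of leaf labels of a rooted binary tree, read from left to right. -/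
def leafList : RTree L → List L
  | leaf b => [b]
  | node l r => leafList l ++ leafList r

/-- The number of leaves of a rooted binary tree. -/
def numLeaves (T : RTree L) : ℕ := T.leafList.length

/-- The set of leaf labels of a rooted binary tree. -/
def leafSet (T : RTree L) : Set L := {b | b ∈ T.leafList}

/-- The height of a rooted binary tree: the maximum distance from the root to a leaf. -/
def height : RTree L → ℕ
  | leaf _ => 0
  | node l r => max (height l) (height r) + 1

/-- A rooted binary tree is balanced if all of its leaves are at the same distance
from the root. -/
def IsBalanced : RTree L → Prop
  | leaf _ => True
  | node l r => IsBalanced l ∧ IsBalanced r ∧ height l = height r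

/-- A rooted binary tree is phylogenetic if its leaves are labelled bijectively by a
finite set, i.e. all leaf labels are distinct. -/
def IsPhylo (T : RTree L) : Prop := T.leafList.Nodup

/-- `Embeds S T` is the subtree relation `S ⪯ T`: there is an injective map `f` from the
vertices of `S` to the vertices of `T` such that `f x = x` for every leaf `x` of `S`
(leaves being identified across trees by their labels) and
`f (x ∧ y) = f x ∧ f y` for all vertices `x`, `y` of `S`, where `∧` denotes the most
recent common ancestor.  Equivalently (for trees with distinct leaf labels), `S` is the
restriction of `T` to the leaf set of `S`, up to rooted isomorphism; this structural
characterization is taken as the definition. -/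
inductive Embeds : RTree L → RTree L → Prop
  | leaf (b : L) : Embeds (RTree.leaf b) (RTree.leaf b)
  | left {S l r : RTree L} : Embeds S l → Embeds S (RTree.node l r)
  | right {S l r : RTree L} : Embeds S r → Embeds S (RTree.node l r)
  | pair {s₁ s₂ l r : RTree L} :
      Embeds s₁ l → Embeds s₂ r → Embeds (RTree.node s₁ s₂) (RTree.node l r)
  | pair_swap {s₁ s₂ l r : RTree L} :
      Embeds s₁ r → Embeds s₂ l → Embeds (RTree.node s₁ s₂) (RTree.node l r)

/-- `mast T₁ T₂` is the maximum cardinality of a subset `X ⊆ L(T₁) ∩ L(T₂)` such that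
the restrictions `T₁|X` and `T₂|X` are isomorphic; equivalently, the maximum number of
leaves of a rooted binary phylogenetic tree `S` with `S ⪯ T₁` and `S ⪯ T₂`. -/
noncomputable def mast (T₁ T₂ : RTree L) : ℕ :=
  sSup {n | ∃ S : RTree L, S.IsPhylo ∧ Embeds S T₁ ∧ Embeds S T₂ ∧ S.numLeaves = n}

end RTree

/-!
# Unrooted binary phylogenetic trees, via rooted representatives

An unrooted binary phylogenetic tree (all internal vertices of degree 3) with at least
two leaves is represented by any rooted binary tree obtained from it by subdividing an
edge and rooting there; conversely, suppressing the (degree-2) root of a rooted binary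
tree yields an unrooted one.  Two rooted trees represent the same unrooted tree (i.e.
the unrooted trees are isomorphic by a graph isomorphism fixing every leaf label) iff
they are related by the equivalence relation `URel` generated by moving the root across
an edge together with (unordered) rooted isomorphism.
-/

namespace RTree

variable {L : Type}

/-- Rooted isomorphism of rooted binary trees, fixing all leaf labels (the two children
of a vertex are unordered). -/
inductive RIso : RTree L → RTree L → Prop
  | leaf (b : L) : RIso (RTree.leaf b) (RTree.leaf b)
  | pair {a b c d : RTree L} :
      RIso a c → RIso b d → RIso (RTree.node a b) (RTree.node c d)
  | pair_swap {a b c d : RTree L} :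
      RIso a d → RIso b c → RIso (RTree.node a b) (RTree.node c d)

/-- Moving the root of a rooted binary tree across one edge of the underlying unrooted
tree: this does not change the unrooted tree obtained by suppressing the root. -/
inductive RootMove : RTree L → RTree L → Prop
  | assoc (a b c : RTree L) :
      RootMove (RTree.node a (RTree.node b c)) (RTree.node (RTree.node a b) c)

/-- `URel S T` holds iff the unrooted binary trees obtained from `S` and `T` by
suppressing their roots are isomorphic by a graph isomorphism fixing every leaf label. -/
def URel (S T : RTree L) : Prop :=
  Relation.EqvGen (fun X Y => RootMove X Y ∨ RIso X Y) S T

/-- `umast T₁ T₂` is the maximum agreement subtree size of the *unrooted* binary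
phylogenetic trees represented by `T₁` and `T₂`: the maximum cardinality of a set
`X ⊆ L(T₁) ∩ L(T₂)` such that the unrooted restrictions `T₁|X` and `T₂|X` are
isomorphic (fixing leaf labels).  Equivalently, the maximum number of leaves of a
common unrooted subtree, given here by a pair of rooted representatives. -/
noncomputable def umast (T₁ T₂ : RTree L) : ℕ :=
  sSup {n | ∃ S₁ S₂ : RTree L, S₁.IsPhylo ∧ S₂.IsPhylo ∧
    Embeds S₁ T₁ ∧ Embeds S₂ T₂ ∧ URel S₁ S₂ ∧ S₁.numLeaves = n}

end RTree

namespace RTree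

variable {L : Type}

/-- The maximum length (number of edges) of a path in a rooted binary tree (the root
counting as a genuine degree-2 vertex). -/
def rdiam : RTree L → ℕ
  | RTree.leaf _ => 0
  | RTree.node l r => max (max (rdiam l) (rdiam r)) (l.height + r.height + 2)

/-- The diameter of the unrooted tree obtained by suppressing the root: the longest
path through the (suppressed) root loses one edge. -/
def udiam : RTree L → ℕ
  | RTree.leaf _ => 0
  | RTree.node l r => max (max (rdiam l) (rdiam r)) (l.height + r.height + 1)

/-- The radius of the unrooted tree represented by a rooted binary tree: the minimum
over vertices `u` of the maximum distance from `u` to any other vertex.  For a tree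
this equals `⌈diameter / 2⌉`. -/
def uradius (T : RTree L) : ℕ := (udiam T + 1) / 2

end RTree


namespace RTree

variable {L : Type}

theorem leafList_ne_nil (T : RTree L) : T.leafList ≠ [] := by
  induction T with
  | leaf b => simp [leafList]
  | node l r ihl ihr => simp [leafList, ihl]

theorem one_le_numLeaves (T : RTree L) : 1 ≤ T.numLeaves := by
  exact List.length_pos_iff.mpr (leafList_ne_nil T)

theorem Embeds.subset {S T : RTree L} (h : Embeds S T) : S.leafList ⊆ T.leafList := by
  induction h with
  | leaf b => exact fun x hx => hx
  | left _ ih => intro x hx; exact List.mem_append_left _ (ih hx)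
  | right _ ih => intro x hx; exact List.mem_append_right _ (ih hx)
  | pair _ _ ih1 ih2 =>
      intro x hx
      rcases List.mem_append.1 hx with h | h
      · exact List.mem_append_left _ (ih1 h)
      · exact List.mem_append_right _ (ih2 h)
  | pair_swap _ _ ih1 ih2 =>
      intro x hx
      rcases List.mem_append.1 hx with h | h
      · exact List.mem_append_right _ (ih1 h)
      · exact List.mem_append_left _ (ih2 h)

theorem Embeds.numLeaves_le {S T : RTree L} (h : Embeds S T) : S.numLeaves ≤ T.numLeaves := by
  induction h with
  | leaf b => exact le_rfl
  | left _ ih => simp only [numLeaves, leafList, List.length_append] at *; omega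
  | right _ ih => simp only [numLeaves, leafList, List.length_append] at *; omega
  | pair _ _ ih1 ih2 => simp only [numLeaves, leafList, List.length_append] at *; omega
  | pair_swap _ _ ih1 ih2 => simp only [numLeaves, leafList, List.length_append] at *; omega

theorem Embeds.trans {S U T : RTree L} (h1 : Embeds S U) (h2 : Embeds U T) : Embeds S T := by
  induction h2 generalizing S with
  | leaf b => exact h1
  | left _ ih => exact .left (ih h1)
  | right _ ih => exact .right (ih h1)
  | pair hl hr ihl ihr =>
      cases h1 with
      | left h => exact .left (ihl h)
      | right h => exact .right (ihr h)
      | pair ha hb => exact .pair (ihl ha) (ihr hb)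
      | pair_swap ha hb => exact .pair_swap (ihr ha) (ihl hb)
  | pair_swap hl hr ihl ihr =>
      cases h1 with
      | left h => exact .right (ihl h)
      | right h => exact .left (ihr h)
      | pair ha hb => exact .pair_swap (ihl ha) (ihr hb)
      | pair_swap ha hb => exact .pair (ihr ha) (ihl hb)

theorem embeds_leaf_of_mem {x : L} {T : RTree L} (h : x ∈ T.leafList) :
    Embeds (RTree.leaf x) T := by
  induction T with
  | leaf b => simp [leafList] at h; subst h; exact .leaf x
  | node l r ihl ihr =>
      rcases List.mem_append.1 h with h | h
      · exact .left (ihl h)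
      · exact .right (ihr h)

theorem embeds_node_comm {S l r : RTree L} (h : Embeds S (RTree.node l r)) :
    Embeds S (RTree.node r l) := by
  cases h with
  | left h => exact .right h
  | right h => exact .left h
  | pair ha hb => exact .pair_swap ha hb
  | pair_swap ha hb => exact .pair ha hb

end RTree
namespace RTree

variable {L : Type}

/-- Restriction of a rooted tree to the leaves satisfying `p`. -/
def restrict : RTree L → (L → Bool) → Option (RTree L)
  | leaf b, p => if p b then some (leaf b) else none
  | node l r, p =>
      match restrict l p, restrict r p with
      | some l', some r' => some (node l' r')
      | some l', none => some l'
      | none, some r' => some r'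
      | none, none => none

theorem restrict_leafList {T : RTree L} {p : L → Bool} :
    (match restrict T p with
      | some S => S.leafList
      | none => []) = T.leafList.filter p := by
  induction T with
  | leaf b =>
      by_cases h : p b = true
      · simp [restrict, h, leafList, List.filter]
      · simp [restrict, h, leafList, List.filter]
  | node l r ihl ihr =>
      show _ = (l.leafList ++ r.leafList).filter p
      rw [List.filter_append, ← ihl, ← ihr]
      rcases hl : restrict l p with _ | l' <;> rcases hr : restrict r p with _ | r' <;>
        simp [restrict, hl, hr, leafList]

theorem restrict_leafList_some {T S : RTree L} {p : L → Bool} (h : restrict T p = some S) :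
    S.leafList = T.leafList.filter p := by
  have := restrict_leafList (T := T) (p := p)
  rw [h] at this
  exact this

theorem restrict_leafList_none {T : RTree L} {p : L → Bool} (h : restrict T p = none) :
    T.leafList.filter p = [] := by
  have := restrict_leafList (T := T) (p := p)
  rw [h] at this
  exact this.symm

theorem restrict_embeds {T S : RTree L} {p : L → Bool} (h : restrict T p = some S) :
    Embeds S T := by
  induction T generalizing S with
  | leaf b =>
      by_cases hb : p b = true
      · simp [restrict, hb] at h; subst h; exact .leaf b
      · simp [restrict, hb] at h
  | node l r ihl ihr =>
      rcases hl : restrict l p with _ | l' <;> rcases hr : restrict r p with _ | r' <;>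
        simp [restrict, hl, hr] at h
      · subst h; exact .right (ihr hr)
      · subst h; exact .left (ihl hl)
      · subst h; exact .pair (ihl hl) (ihr hr)

theorem restrict_height {T S : RTree L} {p : L → Bool} (h : restrict T p = some S) :
    S.height ≤ T.height := by
  induction T generalizing S with
  | leaf b =>
      by_cases hb : p b = true
      · simp [restrict, hb] at h; subst h; exact le_rfl
      · simp [restrict, hb] at h
  | node l r ihl ihr =>
      rcases hl : restrict l p with _ | l' <;> rcases hr : restrict r p with _ | r' <;>
        simp [restrict, hl, hr] at h
      · subst h; exact le_trans (ihr hr) (by simp [height]; omega)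
      · subst h; exact le_trans (ihl hl) (by simp [height]; omega)
      · subst h
        have h1 := ihl hl
        have h2 := ihr hr
        simp [height] at *
        omega

theorem restrict_isSome {T : RTree L} {p : L → Bool} {x : L}
    (hx : x ∈ T.leafList) (hp : p x = true) : ∃ S, restrict T p = some S := by
  rcases h : restrict T p with _ | S
  · have := restrict_leafList_none h
    have : x ∈ T.leafList.filter p := List.mem_filter.2 ⟨hx, hp⟩
    simp_all
  · exact ⟨S, rfl⟩

end RTree
namespace RTree

variable {L : Type}

theorem le_umast {T₁ T₂ S : RTree L} (hφ : S.IsPhylo) (h1 : Embeds S T₁) (h2 : Embeds S T₂) :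
    S.numLeaves ≤ umast T₁ T₂ := by
  apply le_csSup
  · refine ⟨T₁.numLeaves, ?_⟩
    rintro n ⟨S₁, S₂, _, _, hS₁, _, _, rfl⟩
    exact hS₁.numLeaves_le
  · exact ⟨S, S, hφ, hφ, h1, h2, Relation.EqvGen.refl S, rfl⟩

theorem height_le_rdiam (T : RTree L) : T.height ≤ T.rdiam := by
  induction T with
  | leaf b => exact le_rfl
  | node l r ihl ihr =>
      simp only [height, rdiam]
      refine le_trans ?_ (le_max_right _ _)
      have := Nat.le_max_left l.height r.height
      have := Nat.le_max_right l.height r.height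
      omega

theorem height_le_udiam_add_one (T : RTree L) : T.height ≤ T.udiam + 1 := by
  cases T with
  | leaf b => simp [height, udiam]
  | node l r =>
      simp only [height, udiam]
      have h1 := height_le_rdiam l
      have h2 := height_le_rdiam r
      have h3 := Nat.le_max_left l.rdiam r.rdiam
      have h4 := Nat.le_max_right l.rdiam r.rdiam
      have h5 := Nat.le_max_left (max l.rdiam r.rdiam) (l.height + r.height + 1)
      rcases Nat.le_total l.height r.height with h6 | h6 <;>
        simp [Nat.max_eq_right, Nat.max_eq_left, h6] at * <;> omega

theorem height_le_two_uradius_add_one (T : RTree L) : T.height ≤ 2 * T.uradius + 1 := by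
  have h := height_le_udiam_add_one T
  unfold uradius
  omega

end RTree
section Lists

variable {L : Type} [DecidableEq L]

theorem filter_split_count {w l₁ l₂ : List L} (hd : List.Disjoint l₁ l₂)
    (hw : ∀ x ∈ w, x ∈ l₁ ∨ x ∈ l₂) :
    (w.filter (fun x => decide (x ∈ l₁))).length
      + (w.filter (fun x => decide (x ∈ l₂))).length = w.length := by
  induction w with
  | nil => simp
  | cons x w ih =>
      have hx := hw x List.mem_cons_self
      have ih' := ih (fun y hy => hw y (List.mem_cons_of_mem x hy))
      rcases hx with hx | hx
      · have hx2 : x ∉ l₂ := fun h => hd hx h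
        simp [List.filter_cons, hx, hx2, ih']
        omega
      · have hx1 : x ∉ l₁ := fun h => hd h hx
        simp [List.filter_cons, hx, hx1, ih']
        omega

theorem filter_count_symm {l m : List L} (hl : l.Nodup) (hm : m.Nodup) :
    (l.filter (fun x => decide (x ∈ m))).length = (m.filter (fun x => decide (x ∈ l))).length := by
  apply List.Perm.length_eq
  rw [List.perm_ext_iff_of_nodup (hl.filter _) (hm.filter _)]
  intro a
  simp only [List.mem_filter, decide_eq_true_eq]
  tauto

end Lists

section RealLemmas

open Real

theorem logb_good {m a t : ℕ} (ha : 1 ≤ a) (hm : (m : ℝ) ≤ 2 ^ t * a) :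
    Real.logb 2 m ≤ t + Real.logb 2 a := by
  have ha0 : (0:ℝ) ≤ Real.logb 2 a := by
    apply Real.logb_nonneg one_lt_two
    exact_mod_cast ha
  rcases Nat.eq_zero_or_pos m with hm0 | hm0
  · subst hm0; simp; positivity
  · have h1 : Real.logb 2 m ≤ Real.logb 2 (2 ^ t * a) :=
      Real.logb_le_logb_of_le one_lt_two (by exact_mod_cast hm0) hm
    calc Real.logb 2 m ≤ Real.logb 2 (2 ^ t * a) := h1
      _ = Real.logb 2 ((2:ℝ) ^ t) + Real.logb 2 a := by
          rw [Real.logb_mul (by positivity) (by positivity : (0:ℝ) < (a:ℝ)).ne']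
      _ = t + Real.logb 2 a := by
          rw [Real.logb_pow, Real.logb_self_eq_one (by norm_num)]
          ring

theorem logb_bad {m s t : ℕ} (hs : 1 ≤ s) (ht : 1 ≤ t) (hst : 2 ^ t * s < m) :
    Real.logb 2 m ≤ Real.logb 2 ((m - s : ℕ)) + 3 / 2 ^ t := by
  have h2t : (2:ℝ) ≤ 2 ^ t := by
    calc (2:ℝ) = 2 ^ 1 := (pow_one 2).symm
    _ ≤ 2 ^ t := by apply pow_le_pow_right₀ one_le_two ht
  have h2tn : 2 ≤ 2 ^ t := by
    calc 2 = 2 ^ 1 := (pow_one 2).symm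
    _ ≤ 2 ^ t := Nat.pow_le_pow_right (by norm_num) ht
  have hsm : 2 * s < m := by
    have : 2 * s ≤ 2 ^ t * s := Nat.mul_le_mul_right s h2tn
    omega
  have hsm' : s < m := by omega
  have hMpos : (0:ℝ) < m := by
    have : 0 < m := by omega
    exact_mod_cast this
  have hcast : ((m - s : ℕ):ℝ) = (m:ℝ) - s := by
    rw [Nat.cast_sub hsm'.le]
  have hM' : (0:ℝ) < (m:ℝ) - s := by
    have : (s:ℝ) < m := by exact_mod_cast hsm'
    linarith
  rw [hcast]
  have key : Real.logb 2 m - Real.logb 2 ((m:ℝ) - s) ≤ 3 / 2 ^ t := by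
    rw [← Real.logb_div hMpos.ne' hM'.ne']
    have h1 : Real.log ((m:ℝ)/((m:ℝ)-s)) ≤ (m:ℝ)/((m:ℝ)-s) - 1 :=
      Real.log_le_sub_one_of_pos (by positivity)
    have h2 : (m:ℝ)/((m:ℝ)-s) - 1 = (s:ℝ)/((m:ℝ)-s) := by field_simp; ring
    have c1 : (2:ℝ)^t * s ≤ m := by exact_mod_cast hst.le
    have c2 : 2 * (s:ℝ) < m := by exact_mod_cast hsm
    have h3 : (s:ℝ)/((m:ℝ)-s) ≤ 2/2^t := by
      rw [div_le_div_iff₀ hM' (by positivity)]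
      nlinarith
    have hlog2 : (2:ℝ)/3 ≤ Real.log 2 := by
      have := Real.log_two_gt_d9; linarith
    rw [Real.logb]
    rw [div_le_iff₀ (by linarith : (0:ℝ) < Real.log 2)]
    have h4 : Real.log ((m:ℝ)/((m:ℝ)-s)) ≤ 2/2^t := by linarith
    have h5 : (2:ℝ)/2^t ≤ 3 / 2 ^ t * Real.log 2 := by
      have h6 : (3:ℝ) / 2^t * (2/3) ≤ 3/2^t * Real.log 2 := by
        apply mul_le_mul_of_nonneg_left hlog2 (by positivity)
      calc (2:ℝ)/2^t = 3/2^t * (2/3) := by ring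
        _ ≤ _ := h6
    linarith
  linarith

end RealLemmas
namespace RTree

variable {L : Type} [DecidableEq L]

theorem piece {A X : RTree L} (hA : A.leafList.Nodup) (hX : X.leafList.Nodup)
    (hpos : 1 ≤ (A.leafList.filter (fun x => decide (x ∈ X.leafList))).length) :
    ∃ A' X' : RTree L, Embeds A' A ∧ Embeds X' X ∧ A'.IsPhylo ∧ X'.IsPhylo ∧
      (∀ z, z ∈ A'.leafList ↔ z ∈ X'.leafList) ∧
      A'.numLeaves = (A.leafList.filter (fun x => decide (x ∈ X.leafList))).length ∧
      A'.height ≤ A.height ∧ A'.leafList ⊆ A.leafList := by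
  obtain ⟨x, hx⟩ : ∃ x, x ∈ A.leafList.filter (fun x => decide (x ∈ X.leafList)) := by
    apply List.exists_mem_of_length_pos
    omega
  have hxA : x ∈ A.leafList := (List.mem_filter.1 hx).1
  have hxX : x ∈ X.leafList := by simpa using (List.mem_filter.1 hx).2
  obtain ⟨A', hA'⟩ := restrict_isSome (p := fun z => decide (z ∈ X.leafList)) hxA (by simp [hxX])
  obtain ⟨X', hX'⟩ := restrict_isSome (p := fun z => decide (z ∈ A.leafList)) hxX (by simp [hxA])
  have hAll := restrict_leafList_some hA'
  have hXll := restrict_leafList_some hX'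
  refine ⟨A', X', restrict_embeds hA', restrict_embeds hX', ?_, ?_, ?_, ?_,
    restrict_height hA', ?_⟩
  · show A'.leafList.Nodup
    rw [hAll]; exact hA.filter _
  · show X'.leafList.Nodup
    rw [hXll]; exact hX.filter _
  · intro z
    rw [hAll, hXll]
    simp only [List.mem_filter, decide_eq_true_eq]
    tauto
  · show A'.leafList.length = _
    rw [hAll]
  · rw [hAll]
    exact List.filter_subset' _

end RTree
namespace RTree
set_option linter.unusedSectionVars false

variable {L : Type} [DecidableEq L]

theorem height_node_comm (A B : RTree L) : (node A B).height = (node B A).height := by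
  simp [height, Nat.max_comm]

theorem good_case {u γ : ℝ} {t : ℕ} (hu0 : 0 ≤ u) (hγ0 : 0 ≤ γ) (hC2 : u * t ≤ 1 + γ)
    {A B X Y : RTree L} {m : ℕ}
    (hφ₁ : (node A B).IsPhylo) (hXnd : X.leafList.Nodup)
    (hIH : ∀ U₁ U₂ : RTree L, U₁.numLeaves < m → U₁.IsPhylo → U₂.IsPhylo →
      (∀ x, x ∈ U₁.leafList ↔ x ∈ U₂.leafList) →
      ∃ S, S.IsPhylo ∧ Embeds S U₁ ∧ Embeds S U₂ ∧
        u * Real.logb 2 U₁.numLeaves - γ * (U₁.height : ℝ) ≤ (S.numLeaves : ℝ))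
    (ha1 : 1 ≤ (A.leafList.filter (fun x => decide (x ∈ X.leafList))).length)
    (haless : (A.leafList.filter (fun x => decide (x ∈ X.leafList))).length < m)
    (hma : (m : ℝ) ≤ 2 ^ t * ((A.leafList.filter (fun x => decide (x ∈ X.leafList))).length))
    (hy : ∃ y, y ∈ B.leafList ∧ y ∈ Y.leafList) :
    ∃ S, S.IsPhylo ∧ Embeds S (node A B) ∧ Embeds S (node X Y) ∧
      u * Real.logb 2 m - γ * ((node A B).height : ℝ) ≤ (S.numLeaves : ℝ) := by
  have hAnd : A.leafList.Nodup := hφ₁.of_append_left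
  obtain ⟨A', X', heA, heX, hpA, hpX, hmemP, hcount, hht, hsub⟩ := piece hAnd hXnd ha1
  obtain ⟨S₁, hS₁p, hS₁A, hS₁X, hS₁b⟩ :=
    hIH A' X' (by rw [hcount]; exact haless) hpA hpX hmemP
  obtain ⟨y, hyB, hyY⟩ := hy
  refine ⟨node S₁ (leaf y), ?_, ?_, ?_, ?_⟩
  · show (S₁.leafList ++ [y]).Nodup
    rw [List.nodup_append]
    refine ⟨hS₁p, List.nodup_singleton y, ?_⟩
    intro z hz w hw hzw
    have hzA : z ∈ A.leafList := hsub (hS₁A.subset hz)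
    have : w = y := by simpa using hw
    subst this
    subst hzw
    exact (List.disjoint_of_nodup_append hφ₁) hzA hyB
  · exact .pair (hS₁A.trans heA) (embeds_leaf_of_mem hyB)
  · exact .pair (hS₁X.trans heX) (embeds_leaf_of_mem hyY)
  · have hnum : ((node S₁ (leaf y)).numLeaves : ℝ) = (S₁.numLeaves : ℝ) + 1 := by
      show ((S₁.leafList ++ [y]).length : ℝ) = _
      push_cast [List.length_append]
      simp [numLeaves]
    rw [hnum]
    set a := (A.leafList.filter (fun x => decide (x ∈ X.leafList))).length with hadef
    have hlog : Real.logb 2 m ≤ t + Real.logb 2 a := logb_good ha1 hma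
    have hbound : u * Real.logb 2 a - γ * (A'.height : ℝ) ≤ (S₁.numLeaves : ℝ) := by
      rw [hcount] at hS₁b
      exact hS₁b
    have hH : (A'.height : ℝ) + 1 ≤ ((node A B).height : ℝ) := by
      have h1 : A'.height ≤ A.height := hht
      have h2 : A.height + 1 ≤ (node A B).height := by
        simp [height]
      have : A'.height + 1 ≤ (node A B).height := by omega
      exact_mod_cast this
    have hmono : u * Real.logb 2 m ≤ u * (t + Real.logb 2 a) :=
      mul_le_mul_of_nonneg_left hlog hu0
    nlinarith [mul_le_mul_of_nonneg_left hH hγ0]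

theorem bad_case {u γ : ℝ} {t : ℕ} (hu0 : 0 ≤ u) (hγ0 : 0 ≤ γ) (ht1 : 1 ≤ t)
    (hC3 : 3 * u ≤ γ * 2 ^ t)
    {A B T₂ : RTree L} {m : ℕ}
    (hφ₁ : (node A B).IsPhylo) (hφ₂ : T₂.IsPhylo)
    (hmem : ∀ x, x ∈ (node A B).leafList ↔ x ∈ T₂.leafList)
    (hm : (node A B).numLeaves = m)
    (hIH : ∀ U₁ U₂ : RTree L, U₁.numLeaves < m → U₁.IsPhylo → U₂.IsPhylo →
      (∀ x, x ∈ U₁.leafList ↔ x ∈ U₂.leafList) →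
      ∃ S, S.IsPhylo ∧ Embeds S U₁ ∧ Embeds S U₂ ∧
        u * Real.logb 2 U₁.numLeaves - γ * (U₁.height : ℝ) ≤ (S.numLeaves : ℝ))
    (hsmall : 2 ^ t * B.numLeaves < m) :
    ∃ S, S.IsPhylo ∧ Embeds S (node A B) ∧ Embeds S T₂ ∧
      u * Real.logb 2 m - γ * ((node A B).height : ℝ) ≤ (S.numLeaves : ℝ) := by
  obtain ⟨x₀, hx₀⟩ := List.exists_mem_of_length_pos (one_le_numLeaves A)
  have hx₀T₂ : x₀ ∈ T₂.leafList := (hmem x₀).1 (List.mem_append_left _ hx₀)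
  obtain ⟨T₂', hT₂'⟩ :=
    restrict_isSome (p := fun z => decide (z ∈ A.leafList)) hx₀T₂ (by simp [hx₀])
  have hT₂ll := restrict_leafList_some hT₂'
  have hmadd : A.numLeaves + B.numLeaves = m := by
    simpa [numLeaves, leafList, List.length_append] using hm
  have hAless : A.numLeaves < m := by
    have := one_le_numLeaves B
    omega
  obtain ⟨S, hSp, hSA, hST₂', hSb⟩ := hIH A T₂' hAless hφ₁.of_append_left
    (by rw [IsPhylo, hT₂ll]; exact hφ₂.filter _)
    (by
      intro z
      rw [hT₂ll]
      simp only [List.mem_filter, decide_eq_true_eq]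
      constructor
      · intro hz
        exact ⟨(hmem z).1 (List.mem_append_left _ hz), hz⟩
      · intro hz
        exact hz.2)
  refine ⟨S, hSp, .left hSA, hST₂'.trans (restrict_embeds hT₂'), ?_⟩
  have hbadlog : Real.logb 2 m ≤ Real.logb 2 ((m - B.numLeaves : ℕ)) + 3 / 2 ^ t :=
    logb_bad (one_le_numLeaves B) ht1 hsmall
  have hmsub : (m - B.numLeaves : ℕ) = A.numLeaves := by omega
  rw [hmsub] at hbadlog
  have hH : (A.height : ℝ) + 1 ≤ ((node A B).height : ℝ) := by
    have : A.height + 1 ≤ (node A B).height := by simp [height]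
    exact_mod_cast this
  have hdiv : u * (3 / 2 ^ t) ≤ γ := by
    rw [mul_div_assoc'] 
    rw [div_le_iff₀ (by positivity : (0:ℝ) < 2 ^ t)]
    nlinarith
  have hmono : u * Real.logb 2 m ≤ u * (Real.logb 2 A.numLeaves + 3 / 2 ^ t) :=
    mul_le_mul_of_nonneg_left hbadlog hu0
  nlinarith [mul_le_mul_of_nonneg_left hH hγ0]

end RTree
namespace RTree

variable {L : Type} [DecidableEq L]

theorem mem_filter_pair {w v : List L} (h : 1 ≤ (w.filter (fun x => decide (x ∈ v))).length) :
    ∃ y, y ∈ w ∧ y ∈ v := by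
  obtain ⟨y, hy⟩ := List.exists_mem_of_length_pos h
  rw [List.mem_filter] at hy
  exact ⟨y, hy.1, by simpa using hy.2⟩

theorem main_step {u γ : ℝ} {t : ℕ} (hu0 : 0 ≤ u) (hγ0 : 0 ≤ γ) (ht : 2 ≤ t)
    (hC2 : u * t ≤ 1 + γ) (hC3 : 3 * u ≤ γ * 2 ^ t)
    {A B X Y : RTree L} {m : ℕ}
    (hφ₁ : (node A B).IsPhylo) (hφ₂ : (node X Y).IsPhylo)
    (hmem : ∀ x, x ∈ (node A B).leafList ↔ x ∈ (node X Y).leafList)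
    (hm : (node A B).numLeaves = m)
    (hIH : ∀ U₁ U₂ : RTree L, U₁.numLeaves < m → U₁.IsPhylo → U₂.IsPhylo →
      (∀ x, x ∈ U₁.leafList ↔ x ∈ U₂.leafList) →
      ∃ S, S.IsPhylo ∧ Embeds S U₁ ∧ Embeds S U₂ ∧
        u * Real.logb 2 U₁.numLeaves - γ * (U₁.height : ℝ) ≤ (S.numLeaves : ℝ))
    (hbig : m ≤ 4 * (A.leafList.filter (fun x => decide (x ∈ X.leafList))).length) :
    ∃ S, S.IsPhylo ∧ Embeds S (node A B) ∧ Embeds S (node X Y) ∧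
      u * Real.logb 2 m - γ * ((node A B).height : ℝ) ≤ (S.numLeaves : ℝ) := by
  obtain ⟨a, hadef⟩ : ∃ n, n = (A.leafList.filter (fun x => decide (x ∈ X.leafList))).length :=
    ⟨_, rfl⟩
  obtain ⟨b, hbdef⟩ : ∃ n, n = (A.leafList.filter (fun x => decide (x ∈ Y.leafList))).length :=
    ⟨_, rfl⟩
  obtain ⟨c, hcdef⟩ : ∃ n, n = (B.leafList.filter (fun x => decide (x ∈ X.leafList))).length :=
    ⟨_, rfl⟩
  obtain ⟨d, hddef⟩ : ∃ n, n = (B.leafList.filter (fun x => decide (x ∈ Y.leafList))).length :=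
    ⟨_, rfl⟩
  rw [← hadef] at hbig
  have hAnd : A.leafList.Nodup := hφ₁.of_append_left
  have hBnd : B.leafList.Nodup := hφ₁.of_append_right
  have hXnd : X.leafList.Nodup := hφ₂.of_append_left
  have hYnd : Y.leafList.Nodup := hφ₂.of_append_right
  have disjXY : List.Disjoint X.leafList Y.leafList := List.disjoint_of_nodup_append hφ₂
  have disjAB : List.Disjoint A.leafList B.leafList := List.disjoint_of_nodup_append hφ₁
  have hab : a + b = A.leafList.length := by
    rw [hadef, hbdef]
    exact filter_split_count disjXY (fun x hx =>
      List.mem_append.1 ((hmem x).1 (List.mem_append_left _ hx)))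
  have hcd : c + d = B.leafList.length := by
    rw [hcdef, hddef]
    exact filter_split_count disjXY (fun x hx =>
      List.mem_append.1 ((hmem x).1 (List.mem_append_right _ hx)))
  have hsum : a + b + (c + d) = m := by
    rw [hab, hcd, ← hm]
    simp [numLeaves, leafList]
  have h2t4 : 4 ≤ 2 ^ t := by
    calc 4 = 2 ^ 2 := by norm_num
    _ ≤ 2 ^ t := Nat.pow_le_pow_right (by norm_num) ht
  have ht1 : 1 ≤ t := by omega
  have hm1 : 1 ≤ m := hm ▸ one_le_numLeaves _
  have ha1 : 1 ≤ a := by omega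
  by_cases hd : 1 ≤ d
  · refine good_case hu0 hγ0 hC2 hφ₁ hXnd hIH ?_ ?_ ?_ (mem_filter_pair (hddef ▸ hd))
    · rw [← hadef]; omega
    · rw [← hadef]; omega
    · rw [← hadef]
      have : m ≤ 2 ^ t * a := Nat.le_trans hbig (by nlinarith)
      exact_mod_cast this
  · have hd0 : d = 0 := by omega
    have hYlen : 1 ≤ Y.leafList.length := one_le_numLeaves Y
    have hYsplit : (Y.leafList.filter (fun x => decide (x ∈ A.leafList))).length
        + (Y.leafList.filter (fun x => decide (x ∈ B.leafList))).length
        = Y.leafList.length :=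
      filter_split_count disjAB (fun x hx =>
        List.mem_append.1 ((hmem x).2 (List.mem_append_right _ hx)))
    have hYa : (Y.leafList.filter (fun x => decide (x ∈ A.leafList))).length = b := by
      rw [hbdef]
      exact (filter_count_symm hAnd hYnd).symm
    have hYb : (Y.leafList.filter (fun x => decide (x ∈ B.leafList))).length = d := by
      rw [hddef]
      exact (filter_count_symm hBnd hYnd).symm
    have hb1 : 1 ≤ b := by
      rw [← hYa]
      omega
    have hBlen : 1 ≤ B.leafList.length := one_le_numLeaves B
    have hc1 : 1 ≤ c := by omega
    by_cases hbbig : m ≤ 2 ^ t * b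
    · have hφ₂' : (node Y X).IsPhylo := by
        rw [IsPhylo] at *
        exact List.nodup_append_comm.1 hφ₂
      obtain ⟨S, hSp, hS1, hS2, hSb⟩ := good_case hu0 hγ0 hC2 hφ₁ hYnd hIH
        (by rw [← hbdef]; omega) (by rw [← hbdef]; omega)
        (by rw [← hbdef]; exact_mod_cast hbbig) (mem_filter_pair (hcdef ▸ hc1))
      exact ⟨S, hSp, hS1, embeds_node_comm hS2, hSb⟩
    · by_cases hcbig : m ≤ 2 ^ t * c
      · have hφ₁' : (node B A).IsPhylo := by
          rw [IsPhylo] at *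
          exact List.nodup_append_comm.1 hφ₁
        obtain ⟨S, hSp, hS1, hS2, hSb⟩ := good_case hu0 hγ0 hC2 hφ₁' hXnd hIH
          (by rw [← hcdef]; omega) (by rw [← hcdef]; omega)
          (by rw [← hcdef]; exact_mod_cast hcbig) (mem_filter_pair (hbdef ▸ hb1))
        refine ⟨S, hSp, embeds_node_comm hS1, hS2, ?_⟩
        rwa [← height_node_comm] at hSb
      · apply bad_case hu0 hγ0 ht1 hC3 hφ₁ hφ₂ hmem hm hIH
        have hBc : B.numLeaves = c := by
          rw [numLeaves, ← hcd, hd0]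
          omega
        rw [hBc]
        omega

end RTree
namespace RTree

theorem main_bound {L : Type} {u γ : ℝ} {t : ℕ} (hu0 : 0 ≤ u) (hγ0 : 0 ≤ γ) (ht : 2 ≤ t)
    (hC2 : u * t ≤ 1 + γ) (hC3 : 3 * u ≤ γ * 2 ^ t) :
    ∀ (m : ℕ) (T₁ T₂ : RTree L), T₁.numLeaves = m → T₁.IsPhylo → T₂.IsPhylo →
      (∀ x, x ∈ T₁.leafList ↔ x ∈ T₂.leafList) →
      ∃ S, S.IsPhylo ∧ Embeds S T₁ ∧ Embeds S T₂ ∧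
        u * Real.logb 2 m - γ * (T₁.height : ℝ) ≤ (S.numLeaves : ℝ) := by
  letI : DecidableEq L := Classical.decEq L
  intro m
  induction m using Nat.strong_induction_on with
  | _ m IH =>
    intro T₁ T₂ hm hφ₁ hφ₂ hmem
    have hIH : ∀ U₁ U₂ : RTree L, U₁.numLeaves < m → U₁.IsPhylo → U₂.IsPhylo →
        (∀ x, x ∈ U₁.leafList ↔ x ∈ U₂.leafList) →
        ∃ S, S.IsPhylo ∧ Embeds S U₁ ∧ Embeds S U₂ ∧
          u * Real.logb 2 U₁.numLeaves - γ * (U₁.height : ℝ) ≤ (S.numLeaves : ℝ) := by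
      intro U₁ U₂ hlt p1 p2 pm
      exact IH U₁.numLeaves hlt U₁ U₂ rfl p1 p2 pm
    cases T₁ with
    | leaf x =>
      have hm1 : m = 1 := by
        rw [← hm]; rfl
      refine ⟨leaf x, ?_, .leaf x, embeds_leaf_of_mem ((hmem x).1 (by simp [leafList])), ?_⟩
      · simp [IsPhylo, leafList]
      · subst hm1
        show u * Real.logb 2 ((1:ℕ):ℝ) - γ * (((leaf x : RTree L).height):ℝ)
          ≤ (((leaf x : RTree L).numLeaves):ℝ)
        norm_num [height, numLeaves, leafList, Real.logb_one]
    | node A B =>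
      cases T₂ with
      | leaf z =>
        exfalso
        obtain ⟨x, hx⟩ := List.exists_mem_of_length_pos (one_le_numLeaves A)
        obtain ⟨y, hy⟩ := List.exists_mem_of_length_pos (one_le_numLeaves B)
        have hxz : x = z := by
          have := (hmem x).1 (List.mem_append_left _ hx)
          simpa [leafList] using this
        have hyz : y = z := by
          have := (hmem y).1 (List.mem_append_right _ hy)
          simpa [leafList] using this
        subst hxz
        subst hyz
        exact (List.disjoint_of_nodup_append hφ₁) hx hy
      | node X Y =>
        have hab : (A.leafList.filter (fun x => decide (x ∈ X.leafList))).length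
            + (A.leafList.filter (fun x => decide (x ∈ Y.leafList))).length
            = A.leafList.length :=
          filter_split_count (List.disjoint_of_nodup_append hφ₂) (fun x hx =>
            List.mem_append.1 ((hmem x).1 (List.mem_append_left _ hx)))
        have hcd : (B.leafList.filter (fun x => decide (x ∈ X.leafList))).length
            + (B.leafList.filter (fun x => decide (x ∈ Y.leafList))).length
            = B.leafList.length :=
          filter_split_count (List.disjoint_of_nodup_append hφ₂) (fun x hx =>
            List.mem_append.1 ((hmem x).1 (List.mem_append_right _ hx)))
        have hmtot : A.leafList.length + B.leafList.length = m := by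
          rw [← hm]; simp [numLeaves, leafList]
        have hyp4 : m ≤ 4 * (A.leafList.filter (fun x => decide (x ∈ X.leafList))).length
            ∨ m ≤ 4 * (A.leafList.filter (fun x => decide (x ∈ Y.leafList))).length
            ∨ m ≤ 4 * (B.leafList.filter (fun x => decide (x ∈ X.leafList))).length
            ∨ m ≤ 4 * (B.leafList.filter (fun x => decide (x ∈ Y.leafList))).length := by
          omega
        have hφ₁' : (node B A).IsPhylo := by
          rw [IsPhylo] at *
          exact List.nodup_append_comm.1 hφ₁
        have hφ₂' : (node Y X).IsPhylo := by
          rw [IsPhylo] at *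
          exact List.nodup_append_comm.1 hφ₂
        have hmem_BA_XY : ∀ x, x ∈ (node B A).leafList ↔ x ∈ (node X Y).leafList := by
          intro x
          rw [← hmem x]
          show x ∈ B.leafList ++ A.leafList ↔ x ∈ A.leafList ++ B.leafList
          simp only [List.mem_append]
          tauto
        have hmem_AB_YX : ∀ x, x ∈ (node A B).leafList ↔ x ∈ (node Y X).leafList := by
          intro x
          rw [hmem x]
          show x ∈ X.leafList ++ Y.leafList ↔ x ∈ Y.leafList ++ X.leafList
          simp only [List.mem_append]
          tauto
        have hmem_BA_YX : ∀ x, x ∈ (node B A).leafList ↔ x ∈ (node Y X).leafList := by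
          intro x
          rw [hmem_BA_XY x]
          show x ∈ X.leafList ++ Y.leafList ↔ x ∈ Y.leafList ++ X.leafList
          simp only [List.mem_append]
          tauto
        have hmBA : (node B A).numLeaves = m := by
          have e1 : (node B A).numLeaves = B.leafList.length + A.leafList.length := by
            simp [numLeaves, leafList]
          have e2 : (node A B).numLeaves = A.leafList.length + B.leafList.length := by
            simp [numLeaves, leafList]
          rw [e1, ← hm, e2]
          omega
        rcases hyp4 with h4 | h4 | h4 | h4
        · exact main_step hu0 hγ0 ht hC2 hC3 hφ₁ hφ₂ hmem hm hIH h4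
        · obtain ⟨S, hSp, hS1, hS2, hSb⟩ :=
            main_step hu0 hγ0 ht hC2 hC3 hφ₁ hφ₂' hmem_AB_YX hm hIH h4
          exact ⟨S, hSp, hS1, embeds_node_comm hS2, hSb⟩
        · obtain ⟨S, hSp, hS1, hS2, hSb⟩ :=
            main_step hu0 hγ0 ht hC2 hC3 hφ₁' hφ₂ hmem_BA_XY hmBA hIH h4
          refine ⟨S, hSp, embeds_node_comm hS1, hS2, ?_⟩
          rwa [← height_node_comm] at hSb
        · obtain ⟨S, hSp, hS1, hS2, hSb⟩ :=
            main_step hu0 hγ0 ht hC2 hC3 hφ₁' hφ₂' hmem_BA_YX hmBA hIH h4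
          refine ⟨S, hSp, embeds_node_comm hS1, embeds_node_comm hS2, ?_⟩
          rwa [← height_node_comm] at hSb

end RTree
theorem le_two_pow_ceil_logb (x : ℝ) (hx : 0 < x) :
    x ≤ (2:ℝ) ^ (⌈Real.logb 2 x⌉₊ : ℕ) := by
  rcases le_or_gt x 1 with hx1 | hx1
  · exact hx1.trans (one_le_pow₀ one_le_two)
  · have hxe : x = (2:ℝ) ^ (Real.logb 2 x) := (Real.rpow_logb two_pos (by norm_num) hx).symm
    calc x = (2:ℝ) ^ (Real.logb 2 x) := hxe
      _ ≤ (2:ℝ) ^ ((⌈Real.logb 2 x⌉₊ : ℕ) : ℝ) := by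
          apply Real.rpow_le_rpow_of_exponent_le one_le_two
          exact Nat.le_ceil _
      _ = (2:ℝ) ^ (⌈Real.logb 2 x⌉₊ : ℕ) := Real.rpow_natCast 2 _

theorem stmt_4' (k : ℝ) (hk : 0 < k) :
    ∃ αk : ℝ, 0 < αk ∧
      ∀ (L : Type) (T₁ T₂ : RTree L) (n : ℕ),
        T₁.IsPhylo → T₂.IsPhylo → T₁.leafSet = T₂.leafSet → T₁.numLeaves = n →
        (RTree.uradius T₁ : ℝ) ≤ k * Real.logb 2 n - 1 →
        αk * Real.logb 2 n ≤ (RTree.umast T₁ T₂ : ℝ) := by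
  set t : ℕ := ⌈Real.logb 2 (12 * k)⌉₊ + 2 with htdef
  have ht2 : 2 ≤ t := by omega
  have htpos : (0:ℝ) < t := by positivity
  have h2t : 12 * k ≤ (2:ℝ) ^ t := by
    have h1 : 12 * k ≤ (2:ℝ) ^ (⌈Real.logb 2 (12 * k)⌉₊ : ℕ) :=
      le_two_pow_ceil_logb _ (by positivity)
    calc 12 * k ≤ (2:ℝ) ^ (⌈Real.logb 2 (12 * k)⌉₊ : ℕ) := h1
      _ ≤ (2:ℝ) ^ t := by
          apply pow_le_pow_right₀ one_le_two
          omega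
  set u : ℝ := 1 / t with hudef
  set γ : ℝ := 1 / (4 * t * k) with hγdef
  have hu0 : (0:ℝ) ≤ u := by positivity
  have hγ0 : (0:ℝ) ≤ γ := by positivity
  have hγpos : (0:ℝ) < γ := by positivity
  have hC2 : u * t ≤ 1 + γ := by
    rw [hudef]
    rw [div_mul_eq_mul_div, one_mul, div_self (ne_of_gt htpos)]
    linarith
  have hC3 : 3 * u ≤ γ * 2 ^ t := by
    rw [hudef, hγdef]
    rw [show (3:ℝ) * (1 / t) = 3 / t by ring,
      show (1:ℝ) / (4 * t * k) * 2 ^ t = 2 ^ t / (4 * t * k) by ring,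
      div_le_div_iff₀ htpos (by positivity)]
    nlinarith [h2t, htpos, hk]
  refine ⟨1 / (2 * t), by positivity, ?_⟩
  intro L T₁ T₂ n hφ₁ hφ₂ hls hn hrad
  have hmem : ∀ x, x ∈ T₁.leafList ↔ x ∈ T₂.leafList := by
    intro x
    have := Set.ext_iff.1 hls x
    exact this
  obtain ⟨S, hSp, hS1, hS2, hSb⟩ :=
    RTree.main_bound hu0 hγ0 ht2 hC2 hC3 n T₁ T₂ hn hφ₁ hφ₂ hmem
  have hle : (S.numLeaves : ℝ) ≤ (RTree.umast T₁ T₂ : ℝ) := by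
    exact_mod_cast RTree.le_umast hSp hS1 hS2
  have hlogpos : 0 ≤ Real.logb 2 n := by
    have h0 : (0:ℝ) ≤ (RTree.uradius T₁ : ℝ) := Nat.cast_nonneg _
    nlinarith
  have hh : (T₁.height : ℝ) ≤ 2 * k * Real.logb 2 n := by
    have h1 : (T₁.height : ℝ) ≤ 2 * (RTree.uradius T₁ : ℝ) + 1 := by
      have := RTree.height_le_two_uradius_add_one T₁
      exact_mod_cast this
    nlinarith
  have key : 1 / (2 * t) * Real.logb 2 n ≤ u * Real.logb 2 n - γ * (T₁.height : ℝ) := by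
    have hγh : γ * (T₁.height : ℝ) ≤ γ * (2 * k * Real.logb 2 n) :=
      mul_le_mul_of_nonneg_left hh hγ0
    have he : γ * (2 * k * Real.logb 2 n) = 1 / (2 * t) * Real.logb 2 n := by
      rw [hγdef]
      field_simp
      ring
    have he2 : u * Real.logb 2 n = 1 / (2 * t) * Real.logb 2 n + 1 / (2 * t) * Real.logb 2 n := by
      rw [hudef]
      field_simp
      ring
    linarith
  linarith


/-- For every real `k > 0` there is `α_k > 0` such that any two
unrooted binary phylogenetic trees `T₁`, `T₂` on the same leaf set of cardinality `n`,
where `T₁` has radius at most `k·log n - 1`, satisfy `mast{T₁,T₂} ≥ α_k·log n`. -/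
theorem stmt_4 (k : ℝ) (hk : 0 < k) :
    ∃ αk : ℝ, 0 < αk ∧
      ∀ (L : Type) (T₁ T₂ : RTree L) (n : ℕ),
        T₁.IsPhylo → T₂.IsPhylo → T₁.leafSet = T₂.leafSet → T₁.numLeaves = n →
        (RTree.uradius T₁ : ℝ) ≤ k * Real.logb 2 n - 1 →
        αk * Real.logb 2 n ≤ (RTree.umast T₁ T₂ : ℝ) := by
  exact stmt_4' k hk
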